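/- Let C > 0 and suppose f, −g : ℝⁿ → ℝ are both C-semi-concave with f ≥ g, and let K = argmin(f − g). Then f is differentiable at each point of K, and there is a constant C' > 0 such that ‖df(x₂) − df(x₁)‖ ≤ C'‖x₂ − x₁‖ for all x₁, x₂ ∈ K; i.e., x ↦ df(x) is Lipschitz on K. -/

import Mathlib

open Matrix

/-- The gradient vector of f : ℝⁿ → ℝ at x, as a vector in ℝⁿ. -/
noncomputable def gradVec {n : ℕ} (f : (Fin n → ℝ) → ℝ) (x : Fin n → ℝ) :
    Fin n → ℝ :=
  fun i => fderiv ℝ f x (Pi.single i 1)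

lemma dp_nonneg {n : ℕ} (v : Fin n → ℝ) : 0 ≤ v ⬝ᵥ v :=
  Finset.sum_nonneg fun _ _ => mul_self_nonneg _

lemma dp_eq_zero {n : ℕ} {v : Fin n → ℝ} (h : v ⬝ᵥ v = 0) : v = 0 := by
  funext i
  have := (Finset.sum_eq_zero_iff_of_nonneg (fun i _ => mul_self_nonneg (v i))).mp h i (Finset.mem_univ i)
  simpa [mul_self_eq_zero] using this

noncomputable def dotCLM {n : ℕ} (l : Fin n → ℝ) : (Fin n → ℝ) →L[ℝ] ℝ :=
  ∑ i, l i • (ContinuousLinearMap.proj i)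

lemma dotCLM_apply {n : ℕ} (l y : Fin n → ℝ) : dotCLM l y = l ⬝ᵥ y := by
  simp [dotCLM, dotProduct, ContinuousLinearMap.sum_apply]

lemma key {n : ℕ} {C : ℝ} (hC : 0 < C) {f g : (Fin n → ℝ) → ℝ}
    (hf : ∀ x : Fin n → ℝ, ∃ l : Fin n → ℝ, ∀ y : Fin n → ℝ,
      f y - f x - l ⬝ᵥ (y - x) ≤ (1/2) * C * ((y - x) ⬝ᵥ (y - x)))
    (hg : ∀ x : Fin n → ℝ, ∃ l : Fin n → ℝ, ∀ y : Fin n → ℝ,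
      (-g) y - (-g) x - l ⬝ᵥ (y - x) ≤ (1/2) * C * ((y - x) ⬝ᵥ (y - x)))
    {x : Fin n → ℝ} (hx : ∀ y, f x - g x ≤ f y - g y) :
    DifferentiableAt ℝ f x ∧
    ∀ y, |f y - f x - (gradVec f x) ⬝ᵥ (y - x)| ≤ (1/2) * C * ((y - x) ⬝ᵥ (y - x)) := by
  obtain ⟨lf, hlf⟩ := hf x
  obtain ⟨lg, hlg⟩ := hg x
  simp only [Pi.neg_apply] at hlg
  -- lower bound with slope -lg
  have hlow : ∀ y, -((1/2) * C * ((y - x) ⬝ᵥ (y - x))) ≤ f y - f x - (-lg) ⬝ᵥ (y - x) := by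
    intro y
    have h1 := hlg y
    have h2 := hx y
    have h3 : (-lg) ⬝ᵥ (y - x) = -(lg ⬝ᵥ (y - x)) := by rw [neg_dotProduct]
    rw [h3]; linarith
  -- lf = -lg
  have heq : lf = -lg := by
    by_contra hne
    set u : Fin n → ℝ := (-lg) - lf with hu
    have hu0 : u ≠ 0 := fun h => hne (sub_eq_zero.mp (hu ▸ h)).symm
    have ha : 0 < u ⬝ᵥ u :=
      lt_of_le_of_ne (dp_nonneg u) (fun h => hu0 (dp_eq_zero h.symm))
    set t : ℝ := 1 / (2 * C) with ht
    have ht0 : 0 < t := by positivity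
    have hgen : u ⬝ᵥ (t • u) ≤ C * ((t • u) ⬝ᵥ (t • u)) := by
      have h1 := hlf (x + t • u)
      have h2 := hlow (x + t • u)
      have e : x + t • u - x = t • u := add_sub_cancel_left x (t • u)
      rw [e] at h1 h2
      have e2 : u ⬝ᵥ (t • u) = (-lg) ⬝ᵥ (t • u) - lf ⬝ᵥ (t • u) := by
        rw [hu, sub_dotProduct]
      rw [e2]; linarith
    have e3 : u ⬝ᵥ (t • u) = t * (u ⬝ᵥ u) := by
      rw [dotProduct_smul]; simp [smul_eq_mul]
    have e4 : (t • u) ⬝ᵥ (t • u) = t * (t * (u ⬝ᵥ u)) := by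
      rw [smul_dotProduct, dotProduct_smul]; simp [smul_eq_mul]
    rw [e3, e4, ht] at hgen
    have hceq : C * (1 / (2 * C) * (1 / (2 * C) * (u ⬝ᵥ u))) = (1/(4*C)) * (u ⬝ᵥ u) := by
      field_simp; ring
    rw [hceq] at hgen
    have hlt : 1/(4*C) < 1/(2*C) := by
      apply one_div_lt_one_div_of_lt <;> nlinarith
    have := mul_lt_mul_of_pos_right hlt ha
    linarith
  -- two-sided bound with slope lf
  have hts : ∀ y, |f y - f x - lf ⬝ᵥ (y - x)| ≤ (1/2) * C * ((y - x) ⬝ᵥ (y - x)) := by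
    intro y
    rw [abs_le]
    refine ⟨?_, hlf y⟩
    have := hlow y
    rw [← heq] at this
    exact this
  -- differentiability
  have hder : HasFDerivAt f (dotCLM lf) x := by
    rw [hasFDerivAt_iff_isLittleO_nhds_zero, Asymptotics.isLittleO_iff]
    intro ε hε
    have hδ : (0:ℝ) < ε / (C * n + 1) := by positivity
    filter_upwards [Metric.ball_mem_nhds (0 : Fin n → ℝ) hδ] with h hh
    rw [Metric.mem_ball, dist_zero_right] at hh
    have hq : h ⬝ᵥ h ≤ (n : ℝ) * (‖h‖ * ‖h‖) := by
      have : ∀ i : Fin n, h i * h i ≤ ‖h‖ * ‖h‖ := by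
        intro i
        have h1 : |h i| ≤ ‖h‖ := by
          have := norm_le_pi_norm h i
          simpa [Real.norm_eq_abs] using this
        calc h i * h i = |h i| * |h i| := (abs_mul_abs_self _).symm
          _ ≤ ‖h‖ * ‖h‖ := mul_le_mul h1 h1 (abs_nonneg _) (norm_nonneg _)
      calc h ⬝ᵥ h = ∑ i, h i * h i := rfl
        _ ≤ ∑ _i : Fin n, ‖h‖ * ‖h‖ := Finset.sum_le_sum (fun i _ => this i)
        _ = (n : ℝ) * (‖h‖ * ‖h‖) := by simp [Finset.sum_const]
    have hb := hts (x + h)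
    have e : x + h - x = h := add_sub_cancel_left x h
    rw [e] at hb
    rw [dotCLM_apply]
    have hn : ‖f (x + h) - f x - lf ⬝ᵥ h‖ = |f (x + h) - f x - lf ⬝ᵥ h| := rfl
    rw [hn]
    have h2 : |f (x + h) - f x - lf ⬝ᵥ h| ≤ (1/2) * C * ((n:ℝ) * (‖h‖ * ‖h‖)) := by
      refine le_trans hb ?_
      have : (0:ℝ) ≤ (1/2) * C := by positivity
      exact mul_le_mul_of_nonneg_left hq this
    refine le_trans h2 ?_
    have hn0 : (0:ℝ) ≤ (n:ℝ) := Nat.cast_nonneg n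
    have hh' : ‖h‖ ≤ ε / (C * n + 1) := le_of_lt hh
    have h0 : (0:ℝ) ≤ ‖h‖ := norm_nonneg h
    have hkey : ‖h‖ * (C * (n:ℝ) + 1) ≤ ε := (le_div_iff₀ (by positivity)).mp hh'
    nlinarith [mul_le_mul_of_nonneg_left hkey h0,
      mul_nonneg (mul_nonneg hC.le hn0) (mul_self_nonneg ‖h‖)]
  have hgrad : gradVec f x = lf := by
    funext i
    simp [gradVec, hder.fderiv, dotCLM_apply, dotProduct_single]
  exact ⟨hder.differentiableAt, by rw [hgrad]; exact hts⟩

set_option maxHeartbeats 1000000 in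
theorem stmt17 (n : ℕ) (C : ℝ) (hC : 0 < C) (f g : (Fin n → ℝ) → ℝ)
    (hf : ∀ x : Fin n → ℝ, ∃ l : Fin n → ℝ, ∀ y : Fin n → ℝ,
      f y - f x - l ⬝ᵥ (y - x) ≤ (1/2) * C * ((y - x) ⬝ᵥ (y - x)))
    (hg : ∀ x : Fin n → ℝ, ∃ l : Fin n → ℝ, ∀ y : Fin n → ℝ,
      (-g) y - (-g) x - l ⬝ᵥ (y - x) ≤ (1/2) * C * ((y - x) ⬝ᵥ (y - x)))
    (hfg : ∀ x, g x ≤ f x)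
    (K : Set (Fin n → ℝ)) (hK : K = {x | ∀ y, f x - g x ≤ f y - g y}) :
    (∀ x ∈ K, DifferentiableAt ℝ f x) ∧
    ∃ C' > 0, ∀ x₁ ∈ K, ∀ x₂ ∈ K,
      Real.sqrt ((gradVec f x₂ - gradVec f x₁) ⬝ᵥ (gradVec f x₂ - gradVec f x₁))
        ≤ C' * Real.sqrt ((x₂ - x₁) ⬝ᵥ (x₂ - x₁)) := by
  subst hK
  constructor
  · exact fun x hx => (key hC hf hg hx).1
  refine ⟨3 * C, by positivity, ?_⟩
  intro x₁ hx₁ x₂ hx₂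
  set l₁ := gradVec f x₁ with hl₁
  set l₂ := gradVec f x₂ with hl₂
  set v := l₂ - l₁ with hv
  set d := x₂ - x₁ with hd
  set a := v ⬝ᵥ v with hadef
  set b := d ⬝ᵥ d with hbdef
  have ha0 : 0 ≤ a := dp_nonneg v
  have hb0 : 0 ≤ b := dp_nonneg d
  rcases eq_or_lt_of_le ha0 with ha | ha
  · rw [← ha, Real.sqrt_zero]; positivity
  rcases eq_or_lt_of_le hb0 with hb | hb
  · exfalso
    have hdz : d = 0 := dp_eq_zero hb.symm
    have hxx : x₂ = x₁ := by rwa [hd, sub_eq_zero] at hdz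
    have hvz : v = 0 := by rw [hv, hl₂, hl₁, hxx, sub_self]
    rw [hadef, hvz] at ha
    simp [zero_dotProduct] at ha
  have H1 := (key hC hf hg hx₁).2
  have H2 := (key hC hf hg hx₂).2
  rw [← hl₁] at H1
  rw [← hl₂] at H2
  set t : ℝ := Real.sqrt b / Real.sqrt a with ht
  have hsa : 0 < Real.sqrt a := Real.sqrt_pos.mpr ha
  have hsb : 0 < Real.sqrt b := Real.sqrt_pos.mpr hb
  have ht0 : 0 < t := div_pos hsb hsa
  set y := x₂ + t • v with hy
  have e1 : y - x₂ = t • v := add_sub_cancel_left x₂ (t • v)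
  have e2 : y - x₁ = d + t • v := by rw [hy, hd]; abel
  have k1 := (abs_le.mp (H1 y)).2
  have k2 := (abs_le.mp (H2 y)).1
  have k3 := (abs_le.mp (H1 x₂)).1
  rw [e1] at k2
  rw [e2] at k1
  rw [← hd, ← hbdef] at k3
  -- dot product expansions
  have ed1 : (d + t • v) ⬝ᵥ (d + t • v) = b + 2 * t * (v ⬝ᵥ d) + t^2 * a := by
    rw [dotProduct_add, add_dotProduct, add_dotProduct,
      smul_dotProduct, dotProduct_smul, smul_dotProduct,
      dotProduct_comm d v]
    simp [smul_eq_mul]; ring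
  have el1 : l₁ ⬝ᵥ (d + t • v) = l₁ ⬝ᵥ d + t * (l₁ ⬝ᵥ v) := by
    rw [dotProduct_add, dotProduct_smul]; simp [smul_eq_mul]
  have el2 : l₂ ⬝ᵥ (t • v) = t * (l₂ ⬝ᵥ v) := by
    rw [dotProduct_smul]; simp [smul_eq_mul]
  have eq2 : (t • v) ⬝ᵥ (t • v) = t^2 * a := by
    rw [smul_dotProduct, dotProduct_smul]; simp [smul_eq_mul]; ring
  have hva : l₂ ⬝ᵥ v - l₁ ⬝ᵥ v = a := by
    rw [← sub_dotProduct, ← hv, hadef]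
  rw [ed1, el1] at k1
  rw [eq2, el2] at k2
  -- t^2 * a = b
  have hta : t^2 * a = b := by
    have h1 : t^2 = b / a := by
      rw [ht, div_pow, Real.sq_sqrt ha0, Real.sq_sqrt hb0]
    rw [h1]; field_simp
  -- t * (v ⬝ᵥ d) ≤ b
  have hc : t * (v ⬝ᵥ d) ≤ b := by
    have h0 : 0 ≤ (t • v - d) ⬝ᵥ (t • v - d) := dp_nonneg _
    have hexp : (t • v - d) ⬝ᵥ (t • v - d) = t^2 * (v ⬝ᵥ v) - 2 * (t * (v ⬝ᵥ d)) + d ⬝ᵥ d := by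
      simp only [sub_dotProduct, dotProduct_sub, smul_dotProduct,
        dotProduct_smul, smul_eq_mul, dotProduct_comm d v]
      ring
    rw [hexp, ← hadef, ← hbdef, hta] at h0
    linarith
  -- main inequality: t * a ≤ 3 * C * b
  have hmain : t * a ≤ 3 * C * b := by
    have hCc := mul_le_mul_of_nonneg_left hc hC.le
    nlinarith [k1, k2, k3, hva, hta]
  -- conclude
  have hsq : Real.sqrt a * Real.sqrt a = a := Real.mul_self_sqrt ha0
  have hsqb : Real.sqrt b * Real.sqrt b = b := Real.mul_self_sqrt hb0
  have expand : t * a = Real.sqrt b * Real.sqrt a := by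
    rw [ht]
    field_simp
    linear_combination (-1 : ℝ) * hsq
  rw [expand] at hmain
  have : Real.sqrt b * Real.sqrt a ≤ 3 * C * (Real.sqrt b * Real.sqrt b) := by
    rw [hsqb]; exact hmain
  have h2 : Real.sqrt b * Real.sqrt a ≤ Real.sqrt b * (3 * C * Real.sqrt b) := by
    ring_nf; ring_nf at this; linarith
  exact le_of_mul_le_mul_left h2 hsb
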